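/- arXiv:2410.16554 — 3 statements merged into one kernel-verified Lean document; each statement's English description precedes it below -/
import Mathlib

section
/- Let μ, P be Borel probability measures on ℝ^d with μ absolutely continuous with respect to Lebesgue measure, and let ∂φ be the subdifferential of a lower semicontinuous convex function φ : ℝ^d → (−∞, +∞] whose gradient pushes μ forward to P. Then every u ∈ ℝ^d with TD(u; μ) > 0 lies in the interior of the domain of ∂φ (in particular ∂φ(u) ≠ ∅). -/
open scoped RealInnerProductSpace
open MeasureTheory

/-- The subdifferential of an extended-real-valued function. -/
def Subdiff {d : ℕ} (φ : EuclideanSpace ℝ (Fin d) → EReal)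
    (u : EuclideanSpace ℝ (Fin d)) : Set (EuclideanSpace ℝ (Fin d)) :=
  {p | ∀ z, φ u + ((⟪p, z - u⟫ : ℝ) : EReal) ≤ φ z}

private lemma convex_subset_closure_interior
    {F : Type*} [NormedAddCommGroup F] [NormedSpace ℝ F] {s : Set F}
    (hs : Convex ℝ s) (hne : (interior s).Nonempty) : s ⊆ closure (interior s) := by
  obtain ⟨y, hy⟩ := hne
  intro x hx
  have hseq : ∀ n : ℕ, (1 - (1 : ℝ)/(n+1)) • x + ((1 : ℝ)/(n+1)) • y ∈ interior s := by
    intro n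
    have hpos : (0 : ℝ) < 1/(n+1) := by positivity
    refine hs.combo_self_interior_mem_interior hx hy ?_ hpos (by ring)
    rw [sub_nonneg, div_le_one (by positivity)]
    have : (0:ℝ) ≤ (n:ℝ) := Nat.cast_nonneg n
    linarith
  have htend : Filter.Tendsto (fun n : ℕ => (1 - (1 : ℝ)/(n+1)) • x + ((1 : ℝ)/(n+1)) • y)
      Filter.atTop (nhds x) := by
    have h0 : Filter.Tendsto (fun n : ℕ => (1 : ℝ)/(n+1)) Filter.atTop (nhds 0) :=
      tendsto_one_div_add_atTop_nhds_zero_nat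
    have h1 : Filter.Tendsto (fun n : ℕ => (1 - (1 : ℝ)/(n+1))) Filter.atTop (nhds (1 - 0)) :=
      tendsto_const_nhds.sub h0
    have := (h1.smul (tendsto_const_nhds (x := x))).add (h0.smul (tendsto_const_nhds (x := y)))
    simpa using this
  exact mem_closure_of_tendsto htend (Filter.Eventually.of_forall hseq)

private lemma mem_interior_of_convex_full {d : ℕ}
    (μ : Measure (EuclideanSpace ℝ (Fin d))) [IsProbabilityMeasure μ]
    (hac : μ ≪ volume) {S : Set (EuclideanSpace ℝ (Fin d))}
    (hS : Convex ℝ S) (hfull : μ Sᶜ = 0) (u : EuclideanSpace ℝ (Fin d))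
    (hTD : 0 < ⨅ v : Metric.sphere (0 : EuclideanSpace ℝ (Fin d)) 1,
        μ {z | 0 ≤ ⟪(v : EuclideanSpace ℝ (Fin d)), z - u⟫}) :
    u ∈ interior S := by
  have hμS : μ S ≠ 0 := by
    intro h0
    have h1 : μ Set.univ ≤ μ S + μ Sᶜ := by
      rw [← Set.union_compl_self S]; exact measure_union_le _ _
    rw [measure_univ, h0, hfull] at h1
    simp at h1
  have hvol : volume S ≠ 0 := fun h => hμS (hac h)
  have hspan : affineSpan ℝ S = ⊤ := by
    by_contra h
    exact hvol (measure_mono_null (subset_affineSpan ℝ S)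
      (Measure.addHaar_affineSubspace volume _ h))
  have hint : (interior S).Nonempty := hS.interior_nonempty_iff_affineSpan_eq_top.mpr hspan
  by_contra hu
  obtain ⟨f, hf⟩ := geometric_hahn_banach_open_point hS.interior isOpen_interior hu
  have hfle : ∀ z ∈ S, f z ≤ f u := fun z hz =>
    closure_minimal (fun a ha => (hf a ha).le) (isClosed_le f.continuous continuous_const)
      (convex_subset_closure_interior hS hint hz)
  set v0 := (InnerProductSpace.toDual ℝ (EuclideanSpace ℝ (Fin d))).symm f with hv0def
  have hv0app : ∀ x, ⟪v0, x⟫ = f x := fun x => InnerProductSpace.toDual_symm_apply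
  have hv0ne : v0 ≠ 0 := by
    intro h
    obtain ⟨a0, ha0⟩ := hint
    have h1 := hf a0 ha0
    have e1 : f a0 = 0 := by rw [← hv0app a0, h, inner_zero_left]
    have e2 : f u = 0 := by rw [← hv0app u, h, inner_zero_left]
    rw [e1, e2] at h1; exact lt_irrefl _ h1
  set v := ‖v0‖⁻¹ • v0 with hvdef
  have hvmem : v ∈ Metric.sphere (0 : EuclideanSpace ℝ (Fin d)) 1 := by
    rw [mem_sphere_zero_iff_norm]
    exact norm_smul_inv_norm hv0ne
  have hplane : μ {z | ⟪v0, z - u⟫ = 0} = 0 := by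
    have heq : {z | ⟪v0, z - u⟫ = 0}
        = (AffineSubspace.mk' u (ℝ ∙ v0)ᗮ : Set (EuclideanSpace ℝ (Fin d))) := by
      ext z
      rw [Set.mem_setOf_eq, SetLike.mem_coe, AffineSubspace.mem_mk',
        Submodule.mem_orthogonal_singleton_iff_inner_right, vsub_eq_sub]
    have hne : AffineSubspace.mk' u (ℝ ∙ v0)ᗮ ≠ ⊤ := by
      intro h
      have hdir : ((ℝ ∙ v0)ᗮ : Submodule ℝ (EuclideanSpace ℝ (Fin d))) = ⊤ := by
        rw [← AffineSubspace.direction_mk' u ((ℝ ∙ v0)ᗮ), h, AffineSubspace.direction_top]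
      have : v0 ∈ (ℝ ∙ v0)ᗮ := by rw [hdir]; trivial
      rw [Submodule.mem_orthogonal_singleton_iff_inner_right] at this
      exact hv0ne (inner_self_eq_zero.mp this)
    rw [heq]
    exact hac (Measure.addHaar_affineSubspace volume _ hne)
  have key : μ {z | 0 ≤ ⟪v, z - u⟫} = 0 := by
    have hsub : {z | 0 ≤ ⟪v, z - u⟫} ⊆ {z | ⟪v0, z - u⟫ = 0} ∪ Sᶜ := by
      intro z hz
      by_cases hzS : z ∈ S
      · left
        have h1 : ⟪v0, z - u⟫ ≤ 0 := by
          have h2 := hfle z hzS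
          have e : ⟪v0, z - u⟫ = f z - f u := by
            rw [inner_sub_right, hv0app, hv0app]
          linarith
        have h2 : 0 ≤ ⟪v0, z - u⟫ := by
          have hz' : (0:ℝ) ≤ ‖v0‖⁻¹ * ⟪v0, z - u⟫ := by
            rw [← real_inner_smul_left]; exact hz
          have hn : (0:ℝ) < ‖v0‖⁻¹ := by
            rw [inv_pos]; exact norm_pos_iff.mpr hv0ne
          nlinarith
        exact le_antisymm h1 h2 ▸ rfl
      · exact Or.inr hzS
    refine le_antisymm ?_ zero_le
    calc μ {z | 0 ≤ ⟪v, z - u⟫} ≤ μ ({z | ⟪v0, z - u⟫ = 0} ∪ Sᶜ) := measure_mono hsub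
      _ ≤ μ {z | ⟪v0, z - u⟫ = 0} + μ Sᶜ := measure_union_le _ _
      _ = 0 := by rw [hplane, hfull, add_zero]
  have hle := iInf_le (fun v : Metric.sphere (0 : EuclideanSpace ℝ (Fin d)) 1 =>
    μ {z | 0 ≤ ⟪(v : EuclideanSpace ℝ (Fin d)), z - u⟫}) (⟨v, hvmem⟩)
  rw [key] at hle
  exact absurd (lt_of_lt_of_le hTD hle) (lt_irrefl 0)

private lemma exists_subdiff_of_mem_interior {d : ℕ}
    (φ : EuclideanSpace ℝ (Fin d) → EReal)
    (hlsc : LowerSemicontinuous φ)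
    (hconv : ∀ x y : EuclideanSpace ℝ (Fin d), ∀ t : ℝ, 0 ≤ t → t ≤ 1 →
      φ (t • x + (1 - t) • y) ≤ ((t : ℝ) : EReal) * φ x + (((1 - t : ℝ)) : EReal) * φ y)
    (hbot : ∀ x, φ x ≠ ⊥)
    {w : EuclideanSpace ℝ (Fin d)}
    (hw : w ∈ interior {z | φ z < ⊤}) :
    (Subdiff φ w).Nonempty := by
  have hwS : w ∈ {z | φ z < ⊤} := interior_subset hw
  set a : ℝ := (φ w).toReal with hadef
  have ha : (a : EReal) = φ w := EReal.coe_toReal (ne_of_lt hwS) (hbot w)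
  -- the epigraph
  set Epi : Set (EuclideanSpace ℝ (Fin d) × ℝ) := {p | φ p.1 ≤ (p.2 : EReal)} with hEpidef
  have hEpiConv : Convex ℝ Epi := by
    rintro ⟨z, r⟩ hz ⟨z', r'⟩ hz' t s ht hs hts
    have hz1 : φ z ≤ (r : EReal) := hz
    have hz1' : φ z' ≤ (r' : EReal) := hz'
    have hzt : φ z ≠ ⊤ := ne_top_of_le_ne_top (EReal.coe_ne_top r) hz1
    have hzt' : φ z' ≠ ⊤ := ne_top_of_le_ne_top (EReal.coe_ne_top r') hz1'
    have hx : ((φ z).toReal : EReal) = φ z := EReal.coe_toReal hzt (hbot z)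
    have hx' : ((φ z').toReal : EReal) = φ z' := EReal.coe_toReal hzt' (hbot z')
    set x : ℝ := (φ z).toReal
    set x' : ℝ := (φ z').toReal
    have hxr : x ≤ r := by rw [← EReal.coe_le_coe_iff, hx]; exact hz1
    have hxr' : x' ≤ r' := by rw [← EReal.coe_le_coe_iff, hx']; exact hz1'
    have hs' : s = 1 - t := by linarith
    show φ (t • z + s • z') ≤ ((t • r + s • r' : ℝ) : EReal)
    calc φ (t • z + s • z')
        ≤ ((t : ℝ) : EReal) * φ z + (((1 - t : ℝ)) : EReal) * φ z' := by
          rw [hs']; exact hconv z z' t ht (by linarith)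
      _ = ((t * x + (1 - t) * x' : ℝ) : EReal) := by
          rw [← hx, ← hx', ← EReal.coe_mul, ← EReal.coe_mul, ← EReal.coe_add]
      _ ≤ ((t • r + s • r' : ℝ) : EReal) := by
          rw [EReal.coe_le_coe_iff, smul_eq_mul, smul_eq_mul, hs']
          have h1 : t * x ≤ t * r := mul_le_mul_of_nonneg_left hxr ht
          have h2 : (1 - t) * x' ≤ (1 - t) * r' :=
            mul_le_mul_of_nonneg_left hxr' (by linarith)
          linarith
  -- Baire: find an open set on which φ is bounded above
  have hSne : (interior {z | φ z < ⊤}).Nonempty := ⟨w, hw⟩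
  set K : ℕ → Set (EuclideanSpace ℝ (Fin d)) :=
    fun n => (φ ⁻¹' Set.Iic ((n : ℝ) : EReal)) ∪ (interior {z | φ z < ⊤})ᶜ with hKdef
  have hKclosed : ∀ n, IsClosed (K n) :=
    fun n => (hlsc.isClosed_preimage ((n : ℝ) : EReal)).union isOpen_interior.isClosed_compl
  have hKunion : (⋃ n, K n) = Set.univ := by
    apply Set.eq_univ_of_forall
    intro z
    by_cases hz : z ∈ interior {z | φ z < ⊤}
    · have hzS : z ∈ {z | φ z < ⊤} := interior_subset hz
      rw [Set.mem_setOf_eq] at hzS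
      obtain ⟨n, hn⟩ := exists_nat_ge ((φ z).toReal)
      refine Set.mem_iUnion.mpr ⟨n, Or.inl ?_⟩
      show φ z ≤ ((n : ℝ) : EReal)
      rw [← EReal.coe_toReal (ne_of_lt hzS) (hbot z), EReal.coe_le_coe_iff]
      exact hn
    · exact Set.mem_iUnion.mpr ⟨0, Or.inr hz⟩
  have hdense := dense_iUnion_interior_of_closed hKclosed hKunion
  obtain ⟨x0, hx0d, hx0U⟩ := hdense.exists_mem_open isOpen_interior hSne
  obtain ⟨n, hx0K⟩ := Set.mem_iUnion.mp hx0d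
  have hUopen : IsOpen (interior {z | φ z < ⊤} ∩ interior (K n)) :=
    isOpen_interior.inter isOpen_interior
  have hUmem : x0 ∈ interior {z | φ z < ⊤} ∩ interior (K n) := ⟨hx0U, hx0K⟩
  have hUsub : interior {z | φ z < ⊤} ∩ interior (K n) ⊆ φ ⁻¹' Set.Iic ((n : ℝ) : EReal) := by
    intro y hy
    rcases interior_subset hy.2 with h | h
    · exact h
    · exact absurd hy.1 h
  -- interior of Epi is nonempty
  have hprodsub : (interior {z | φ z < ⊤} ∩ interior (K n)) ×ˢ Set.Ioi ((n : ℝ)) ⊆ Epi := by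
    rintro ⟨z, r⟩ ⟨hz, hr⟩
    show φ z ≤ (r : EReal)
    exact le_trans (hUsub hz) (EReal.coe_le_coe_iff.mpr (le_of_lt hr))
  have hIntNe : (interior Epi).Nonempty := by
    refine ⟨(x0, (n : ℝ) + 1), ?_⟩
    exact ((hUopen.prod isOpen_Ioi).subset_interior_iff.mpr hprodsub)
      ⟨hUmem, Set.mem_Ioi.mpr (lt_add_one _)⟩
  -- (w, a) is not in the interior of Epi
  have hwaNot : ((w, a) : EuclideanSpace ℝ (Fin d) × ℝ) ∉ interior Epi := by
    intro h
    obtain ⟨ε, hε, hball⟩ := Metric.isOpen_iff.mp isOpen_interior _ h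
    have hmem : ((w, a - ε/2) : EuclideanSpace ℝ (Fin d) × ℝ) ∈ Epi := by
      refine interior_subset (hball ?_)
      rw [Metric.mem_ball, Prod.dist_eq]
      have h1 : dist w w = 0 := dist_self w
      have h2 : dist (a - ε/2) a = ε/2 := by
        rw [Real.dist_eq, show a - ε/2 - a = -(ε/2) by ring, abs_neg, abs_of_pos (by linarith)]
      rw [h1, h2]
      rw [max_eq_right (by linarith)]
      linarith
    have h3 : φ w ≤ ((a - ε/2 : ℝ) : EReal) := hmem
    rw [← ha, EReal.coe_le_coe_iff] at h3
    linarith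
  -- separation
  obtain ⟨f, hf⟩ := geometric_hahn_banach_open_point hEpiConv.interior isOpen_interior hwaNot
  have hfle : ∀ p ∈ Epi, f p ≤ f (w, a) := fun p hp =>
    closure_minimal (fun q hq => (hf q hq).le) (isClosed_le f.continuous continuous_const)
      (convex_subset_closure_interior hEpiConv hIntNe hp)
  set c : ℝ := f ((0 : EuclideanSpace ℝ (Fin d)), (1 : ℝ)) with hcdef
  have hdec : ∀ (z : EuclideanSpace ℝ (Fin d)) (r : ℝ), f (z, r) = f (z, 0) + r * c := by
    intro z r
    have he : ((z, r) : EuclideanSpace ℝ (Fin d) × ℝ)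
        = (z, 0) + r • ((0 : EuclideanSpace ℝ (Fin d)), (1 : ℝ)) := by
      ext
      · simp
      · simp
    rw [he, map_add, f.map_smul, smul_eq_mul]
  have hcle : c ≤ 0 := by
    have h1 : f (w, a + 1) ≤ f (w, a) := by
      refine hfle _ ?_
      show φ w ≤ ((a + 1 : ℝ) : EReal)
      rw [← ha, EReal.coe_le_coe_iff]; linarith
    rw [hdec w (a + 1), hdec w a] at h1
    linarith
  have hcneg : c < 0 := by
    rcases lt_or_eq_of_le hcle with h | h
    · exact h
    exfalso
    have hc0 : c = 0 := h
    have hG : ∀ z, φ z < ⊤ → f (z, 0) ≤ f (w, 0) := by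
      intro z hz
      have hx : ((φ z).toReal : EReal) = φ z := EReal.coe_toReal (ne_of_lt hz) (hbot z)
      have hE : ((z, (φ z).toReal) : EuclideanSpace ℝ (Fin d) × ℝ) ∈ Epi := by
        show φ z ≤ _; rw [hx]
      have h2 := hfle _ hE
      rw [hdec z ((φ z).toReal), hdec w a, hc0] at h2
      linarith
    obtain ⟨δ, hδ, hballS⟩ := Metric.isOpen_iff.mp isOpen_interior w hw
    have hsmall : ∀ y : EuclideanSpace ℝ (Fin d), ‖y‖ < δ → f (y, 0) = 0 := by
      intro y hy
      have hmem1 : w + y ∈ Metric.ball w δ := by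
        rw [Metric.mem_ball, dist_eq_norm, add_sub_cancel_left]; exact hy
      have hmem2 : w - y ∈ Metric.ball w δ := by
        rw [Metric.mem_ball, dist_eq_norm, sub_sub_cancel_left, norm_neg]; exact hy
      have h1 : w + y ∈ {z | φ z < ⊤} := interior_subset (hballS hmem1)
      have h2 : w - y ∈ {z | φ z < ⊤} := interior_subset (hballS hmem2)
      rw [Set.mem_setOf_eq] at h1 h2
      have e1 : f ((w + y : EuclideanSpace ℝ (Fin d)), (0:ℝ)) = f (w, 0) + f (y, 0) := by
        rw [show ((w + y : EuclideanSpace ℝ (Fin d)), (0:ℝ))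
          = ((w, (0:ℝ)) + (y, (0:ℝ))) by ext <;> simp, map_add]
      have e2 : f ((w - y : EuclideanSpace ℝ (Fin d)), (0:ℝ)) = f (w, 0) - f (y, 0) := by
        rw [show ((w - y : EuclideanSpace ℝ (Fin d)), (0:ℝ))
          = ((w, (0:ℝ)) - (y, (0:ℝ))) by ext <;> simp, map_sub]
      have g1 := hG _ h1
      have g2 := hG _ h2
      rw [e1] at g1
      rw [e2] at g2
      linarith
    have hzero : ∀ y : EuclideanSpace ℝ (Fin d), f (y, 0) = 0 := by
      intro y
      rcases eq_or_ne y 0 with rfl | hy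
      · exact hsmall 0 (by rw [norm_zero]; exact hδ)
      · have hny : (0:ℝ) < ‖y‖ := norm_pos_iff.mpr hy
        have ht : 0 < δ / (2 * ‖y‖) := by positivity
        have hts : ‖(δ / (2 * ‖y‖)) • y‖ < δ := by
          have hq : δ / (2 * ‖y‖) * ‖y‖ = δ / 2 := by
            field_simp
          rw [norm_smul, Real.norm_eq_abs, abs_of_pos ht, hq]
          linarith
        have h0 := hsmall _ hts
        have e : f (((δ / (2 * ‖y‖)) • y : EuclideanSpace ℝ (Fin d)), (0:ℝ))
            = (δ / (2 * ‖y‖)) * f (y, 0) := by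
          rw [show (((δ / (2 * ‖y‖)) • y : EuclideanSpace ℝ (Fin d)), (0:ℝ))
            = (δ / (2 * ‖y‖)) • ((y : EuclideanSpace ℝ (Fin d)), (0:ℝ)) by ext <;> simp,
            f.map_smul, smul_eq_mul]
        rw [e] at h0
        exact (mul_eq_zero.mp h0).resolve_left (ne_of_gt ht)
    obtain ⟨p0, hp0⟩ := hIntNe
    have hlt := hf p0 hp0
    have e1 : f p0 = 0 := by
      rw [show p0 = (p0.1, p0.2) from rfl, hdec p0.1 p0.2, hzero, hc0]; ring
    have e2 : f (w, a) = 0 := by rw [hdec w a, hzero, hc0]; ring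
    rw [e1, e2] at hlt
    exact lt_irrefl _ hlt
  -- build the subgradient
  set p : EuclideanSpace ℝ (Fin d) := (InnerProductSpace.toDual ℝ (EuclideanSpace ℝ (Fin d))).symm
    ((-c)⁻¹ • (f.comp (ContinuousLinearMap.inl ℝ (EuclideanSpace ℝ (Fin d)) ℝ))) with hpdef
  have hpapp : ∀ x : EuclideanSpace ℝ (Fin d), ⟪p, x⟫ = (-c)⁻¹ * f (x, 0) := by
    intro x
    rw [hpdef, InnerProductSpace.toDual_symm_apply]
    rfl
  refine ⟨p, fun z => ?_⟩
  by_cases hzt : φ z = ⊤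
  · rw [hzt]; exact le_top
  · have hx : ((φ z).toReal : EReal) = φ z := EReal.coe_toReal hzt (hbot z)
    have hE : ((z, (φ z).toReal) : EuclideanSpace ℝ (Fin d) × ℝ) ∈ Epi := by
      show φ z ≤ _; rw [hx]
    have h1 := hfle _ hE
    rw [hdec z ((φ z).toReal), hdec w a] at h1
    have hcpos : 0 < -c := by linarith
    have e1 : f (z, 0) - f (w, 0) ≤ ((φ z).toReal - a) * (-c) := by nlinarith
    have e2 : (-c)⁻¹ * (f (z, 0) - f (w, 0)) ≤ (-c)⁻¹ * (((φ z).toReal - a) * (-c)) :=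
      mul_le_mul_of_nonneg_left e1 (by positivity)
    have e3 : (-c)⁻¹ * (((φ z).toReal - a) * (-c)) = (φ z).toReal - a := by
      rw [mul_comm ((φ z).toReal - a) (-c), ← mul_assoc, inv_mul_cancel₀ (ne_of_gt hcpos), one_mul]
    have hinner : ⟪p, z - w⟫ = (-c)⁻¹ * (f (z, 0) - f (w, 0)) := by
      rw [inner_sub_right, hpapp, hpapp]; ring
    have hfin : a + ⟪p, z - w⟫ ≤ (φ z).toReal := by rw [hinner]; linarith
    show φ w + ((⟪p, z - w⟫ : ℝ) : EReal) ≤ φ z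
    rw [← ha, ← hx, ← EReal.coe_add, EReal.coe_le_coe_iff]
    exact hfin

/-- If the gradient of a l.s.c. convex function `φ` pushes `μ` (absolutely continuous) forward
to `P`, then every point of strictly positive Tukey depth w.r.t. `μ` lies in the interior of the
domain of `∂φ`. -/
theorem tukeyDepth_pos_mem_interior_domain_subdiff {d : ℕ}
    (μ P : Measure (EuclideanSpace ℝ (Fin d)))
    [IsProbabilityMeasure μ] [IsProbabilityMeasure P]
    (hac : μ ≪ volume)
    (φ : EuclideanSpace ℝ (Fin d) → EReal)
    (hlsc : LowerSemicontinuous φ)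
    (hconv : ∀ x y : EuclideanSpace ℝ (Fin d), ∀ t : ℝ, 0 ≤ t → t ≤ 1 →
      φ (t • x + (1 - t) • y) ≤ ((t : ℝ) : EReal) * φ x + (((1 - t : ℝ)) : EReal) * φ y)
    (T : EuclideanSpace ℝ (Fin d) → EuclideanSpace ℝ (Fin d)) (hTmeas : Measurable T)
    (hgrad : ∀ᵐ u ∂μ, T u ∈ Subdiff φ u)
    (hpush : μ.map T = P)
    (u : EuclideanSpace ℝ (Fin d))
    (hTD : 0 < ⨅ v : Metric.sphere (0 : EuclideanSpace ℝ (Fin d)) 1,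
        μ {z | 0 ≤ ⟪(v : EuclideanSpace ℝ (Fin d)), z - u⟫}) :
    u ∈ interior {w | (Subdiff φ w).Nonempty} := by
  have hDnull : μ {w | (Subdiff φ w).Nonempty}ᶜ = 0 := by
    refine measure_mono_null ?_ (ae_iff.mp hgrad)
    intro w hw
    exact fun h => hw ⟨T w, h⟩
  by_cases hbot : ∃ x0, φ x0 = ⊥
  · -- φ takes the value ⊥ somewhere; then the domain of ∂φ is exactly {φ = ⊥}
    obtain ⟨x0, hx0⟩ := hbot
    have hDeq : {w | (Subdiff φ w).Nonempty} = {z | φ z = ⊥} := by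
      ext w
      constructor
      · rintro ⟨p, hp⟩
        have h1 := hp x0
        rw [hx0] at h1
        have h2 : φ w + ((⟪p, x0 - w⟫ : ℝ) : EReal) = ⊥ := le_bot_iff.mp h1
        rcases EReal.add_eq_bot_iff.mp h2 with h | h
        · exact h
        · exact absurd h (EReal.coe_ne_bot _)
      · intro hw
        refine ⟨0, fun z => ?_⟩
        rw [Set.mem_setOf_eq.mp hw, EReal.bot_add]
        exact bot_le
    rw [hDeq]
    rw [hDeq] at hDnull
    have hBconv : Convex ℝ {z | φ z = ⊥} := by
      rintro z hz z' hz' t s ht hs hts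
      have hs' : s = 1 - t := by linarith
      show φ (t • z + s • z') = ⊥
      rw [hs']
      refine le_bot_iff.mp (le_trans (hconv z z' t ht (by linarith)) ?_)
      rw [Set.mem_setOf_eq.mp hz, Set.mem_setOf_eq.mp hz']
      rcases eq_or_lt_of_le ht with h0 | h0
      · rw [← h0]
        simp only [EReal.coe_zero, zero_mul, sub_zero, EReal.coe_one, one_mul, zero_add]
        exact le_refl ⊥
      · rw [EReal.coe_mul_bot_of_pos h0, EReal.bot_add]
    exact mem_interior_of_convex_full μ hac hBconv hDnull u hTD
  · push_neg at hbot
    by_cases htop : ∀ x, φ x = ⊤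
    · -- φ ≡ ⊤ : every point has a (trivial) subgradient
      have : {w | (Subdiff φ w).Nonempty} = Set.univ := by
        apply Set.eq_univ_of_forall
        intro w
        refine ⟨0, fun z => ?_⟩
        rw [htop w, htop z, EReal.top_add_coe]
      rw [this, interior_univ]
      trivial
    · push_neg at htop
      obtain ⟨x1, hx1⟩ := htop
      -- the domain of φ
      have hDS : {w | (Subdiff φ w).Nonempty} ⊆ {z | φ z < ⊤} := by
        rintro w ⟨p, hp⟩
        show φ w < ⊤
        rcases lt_or_eq_of_le (le_top : φ w ≤ ⊤) with h | h
        · exact h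
        · exfalso
          have h1 := hp x1
          rw [h, EReal.top_add_coe] at h1
          exact hx1 (top_le_iff.mp h1)
      have hSnull : μ {z | φ z < ⊤}ᶜ = 0 :=
        measure_mono_null (Set.compl_subset_compl.mpr hDS) hDnull
      have hSconv : Convex ℝ {z | φ z < ⊤} := by
        rintro z hz z' hz' t s ht hs hts
        have hz1 : φ z < ⊤ := hz
        have hz1' : φ z' < ⊤ := hz'
        have hx : ((φ z).toReal : EReal) = φ z := EReal.coe_toReal (ne_of_lt hz1) (hbot z)
        have hx' : ((φ z').toReal : EReal) = φ z' := EReal.coe_toReal (ne_of_lt hz1') (hbot z')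
        have hs' : s = 1 - t := by linarith
        show φ (t • z + s • z') < ⊤
        rw [hs']
        refine lt_of_le_of_lt (hconv z z' t ht (by linarith)) ?_
        rw [← hx, ← hx', ← EReal.coe_mul, ← EReal.coe_mul, ← EReal.coe_add]
        exact EReal.coe_lt_top _
      have hu : u ∈ interior {z | φ z < ⊤} :=
        mem_interior_of_convex_full μ hac hSconv hSnull u hTD
      have hsub : interior {z | φ z < ⊤} ⊆ {w | (Subdiff φ w).Nonempty} :=
        fun w hw => exists_subdiff_of_mem_interior φ hlsc hconv hbot hw
      exact interior_maximal hsub isOpen_interior hu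
end

section
/- Let μ be absolutely continuous with respect to Lebesgue measure on ℝ^d and u ∈ ℝ^d. Then the map v ↦ μ({y : ⟨v, y − u⟩ ≥ 0}) is continuous on the unit sphere S^{d−1}, and the infimum defining TD(u; μ) is attained: there exists v_u ∈ S^{d−1} with μ({y : ⟨v_u, y − u⟩ ≥ 0}) = TD(u; μ). -/
open scoped RealInnerProductSpace
open MeasureTheory Filter

lemma hyperplane_null {d : ℕ} (μ : Measure (EuclideanSpace ℝ (Fin d)))
    (hac : μ ≪ volume) (u v : EuclideanSpace ℝ (Fin d)) (hv : v ≠ 0) :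
    μ {y | ⟪v, y - u⟫ = 0} = 0 := by
  apply hac
  have hset : {y : EuclideanSpace ℝ (Fin d) | ⟪v, y - u⟫ = 0}
      = (fun y => y + (-u)) ⁻¹' ((Submodule.span ℝ {v})ᗮ : Set (EuclideanSpace ℝ (Fin d))) := by
    ext y
    simp [Submodule.mem_orthogonal_singleton_iff_inner_right, sub_eq_add_neg]
  rw [hset, measure_preimage_add_right]
  apply Measure.addHaar_submodule
  intro htop
  have : v ∈ (Submodule.span ℝ {v})ᗮ := htop ▸ Submodule.mem_top
  rw [Submodule.mem_orthogonal_singleton_iff_inner_right] at this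
  exact hv (inner_self_eq_zero.mp this)

/-- For an absolutely continuous probability measure, the halfspace-mass function is continuous
on the unit sphere and the Tukey depth infimum is attained. -/
theorem halfspace_mass_continuous_and_tukeyDepth_attained {d : ℕ} (hd : 0 < d)
    (μ : Measure (EuclideanSpace ℝ (Fin d))) [IsProbabilityMeasure μ]
    (hac : μ ≪ volume) (u : EuclideanSpace ℝ (Fin d)) :
    Continuous (fun v : Metric.sphere (0 : EuclideanSpace ℝ (Fin d)) 1 =>
      μ {y | 0 ≤ ⟪(v : EuclideanSpace ℝ (Fin d)), y - u⟫}) ∧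
    ∃ v₀ : Metric.sphere (0 : EuclideanSpace ℝ (Fin d)) 1,
      μ {y | 0 ≤ ⟪(v₀ : EuclideanSpace ℝ (Fin d)), y - u⟫}
        = ⨅ v : Metric.sphere (0 : EuclideanSpace ℝ (Fin d)) 1,
            μ {y | 0 ≤ ⟪(v : EuclideanSpace ℝ (Fin d)), y - u⟫} := by
  have hmeas : ∀ v : EuclideanSpace ℝ (Fin d), MeasurableSet {y : EuclideanSpace ℝ (Fin d) | 0 ≤ ⟪v, y - u⟫} := by
    intro v
    exact measurableSet_le measurable_const
      ((continuous_inner.comp (continuous_const.prodMk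
        (continuous_id.sub continuous_const))).measurable)
  have hcont : Continuous (fun v : Metric.sphere (0 : EuclideanSpace ℝ (Fin d)) 1 =>
      μ {y | 0 ≤ ⟪(v : EuclideanSpace ℝ (Fin d)), y - u⟫}) := by
    apply SeqContinuous.continuous
    intro V v hV
    have hvne : (v : EuclideanSpace ℝ (Fin d)) ≠ 0 := ne_zero_of_mem_unit_sphere v
    have hVtend : Tendsto (fun n => (V n : EuclideanSpace ℝ (Fin d))) atTop (nhds (v : EuclideanSpace ℝ (Fin d))) :=
      (continuous_subtype_val.tendsto v).comp hV
    have key : Tendsto (fun n => ∫⁻ y, ({y : EuclideanSpace ℝ (Fin d) | 0 ≤ ⟪(V n : EuclideanSpace ℝ (Fin d)), y - u⟫}).indicator 1 y ∂μ)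
        atTop (nhds (∫⁻ y, ({y : EuclideanSpace ℝ (Fin d) | 0 ≤ ⟪(v : EuclideanSpace ℝ (Fin d)), y - u⟫}).indicator 1 y ∂μ)) := by
      apply tendsto_lintegral_of_dominated_convergence (fun _ => 1)
      · intro n; exact measurable_one.indicator (hmeas _)
      · intro n; exact ae_of_all _ fun y => Set.indicator_le_self _ _ y
      · simp
      · have hnull : ∀ᵐ y ∂μ, ⟪(v : EuclideanSpace ℝ (Fin d)), y - u⟫ ≠ 0 := by
          have := hyperplane_null μ hac u v hvne
          rw [← compl_compl {y : EuclideanSpace ℝ (Fin d) | ⟪(v : EuclideanSpace ℝ (Fin d)), y - u⟫ = 0}] at this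
          exact (ae_iff.mpr (by simpa using this))
        filter_upwards [hnull] with y hy
        have htd : Tendsto (fun n => ⟪(V n : EuclideanSpace ℝ (Fin d)), y - u⟫) atTop (nhds ⟪(v : EuclideanSpace ℝ (Fin d)), y - u⟫) :=
          hVtend.inner tendsto_const_nhds
        rcases hy.lt_or_gt with hlt | hgt
        · have hev : ∀ᶠ n in atTop, ⟪(V n : EuclideanSpace ℝ (Fin d)), y - u⟫ < 0 := htd.eventually (eventually_lt_nhds hlt)
          refine Tendsto.congr' ?_ tendsto_const_nhds
          filter_upwards [hev] with n hn
          simp only [Set.indicator_apply, Set.mem_setOf_eq]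
          rw [if_neg (not_le.mpr hlt), if_neg (not_le.mpr hn)]
        · have hev : ∀ᶠ n in atTop, 0 < ⟪(V n : EuclideanSpace ℝ (Fin d)), y - u⟫ := htd.eventually (eventually_gt_nhds hgt)
          refine Tendsto.congr' ?_ tendsto_const_nhds
          filter_upwards [hev] with n hn
          simp only [Set.indicator_apply, Set.mem_setOf_eq]
          rw [if_pos hgt.le, if_pos hn.le]
    simpa only [Function.comp_def, lintegral_indicator_one (hmeas _)] using key
  refine ⟨hcont, ?_⟩
  haveI : Nonempty (Fin d) := Fin.pos_iff_nonempty.mp hd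
  haveI : Nonempty (Metric.sphere (0 : EuclideanSpace ℝ (Fin d)) 1) :=
    (NormedSpace.sphere_nonempty.mpr zero_le_one).to_subtype
  obtain ⟨v₀, -, hmin⟩ := IsCompact.exists_isMinOn (isCompact_univ
    (X := Metric.sphere (0 : EuclideanSpace ℝ (Fin d)) 1)) Set.univ_nonempty hcont.continuousOn
  exact ⟨v₀, le_antisymm (le_iInf fun w => hmin (Set.mem_univ w)) (iInf_le _ v₀)⟩
end

section
/- Let μ be a probability measure on ℝ^d absolutely continuous with respect to Lebesgue measure and halfspace-symmetric about a point m (every closed halfspace containing m has μ-mass ≥ 1/2). Then TD(m; μ) = 1/2 = max_{x ∈ ℝ^d} TD(x; μ). -/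
open scoped RealInnerProductSpace
open MeasureTheory

/-- A halfspace-symmetric absolutely continuous probability measure has Tukey depth `1/2` at its
center of symmetry, and this is the maximal Tukey depth. -/
theorem tukeyDepth_of_halfspace_symmetric {d : ℕ} (hd : 0 < d)
    (μ : Measure (EuclideanSpace ℝ (Fin d))) [IsProbabilityMeasure μ]
    (hac : μ ≪ volume) (m : EuclideanSpace ℝ (Fin d))
    (hsym : ∀ (v : EuclideanSpace ℝ (Fin d)) (c : ℝ), ‖v‖ = 1 → c ≤ ⟪v, m⟫ →
      (1 / 2 : ENNReal) ≤ μ {z | c ≤ ⟪v, z⟫}) :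
    (⨅ v : Metric.sphere (0 : EuclideanSpace ℝ (Fin d)) 1,
        μ {z | 0 ≤ ⟪(v : EuclideanSpace ℝ (Fin d)), z - m⟫}) = 1 / 2 ∧
    (⨆ x : EuclideanSpace ℝ (Fin d),
        ⨅ v : Metric.sphere (0 : EuclideanSpace ℝ (Fin d)) 1,
          μ {z | 0 ≤ ⟪(v : EuclideanSpace ℝ (Fin d)), z - x⟫}) = 1 / 2 := by
  -- hyperplanes are null
  have hplane : ∀ (v x : EuclideanSpace ℝ (Fin d)), v ≠ 0 →
      μ {z | ⟪v, z - x⟫ = 0} = 0 := by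
    intro v x hv
    apply hac
    have hset : {z : EuclideanSpace ℝ (Fin d) | ⟪v, z - x⟫ = 0} =
        (fun z => z + (-x)) ⁻¹' (LinearMap.ker (innerSL ℝ v : EuclideanSpace ℝ (Fin d) →ₗ[ℝ] ℝ) : Set (EuclideanSpace ℝ (Fin d))) := by
      ext z
      simp [LinearMap.mem_ker, sub_eq_add_neg]
    rw [hset, measure_preimage_add_right]
    apply Measure.addHaar_submodule
    intro h
    apply hv
    have hvker : v ∈ LinearMap.ker (innerSL ℝ v : EuclideanSpace ℝ (Fin d) →ₗ[ℝ] ℝ) := h ▸ Submodule.mem_top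
    rw [LinearMap.mem_ker] at hvker
    exact inner_self_eq_zero.mp hvker
  have hmeas : ∀ (v : EuclideanSpace ℝ (Fin d)) (c : ℝ),
      MeasurableSet {z : EuclideanSpace ℝ (Fin d) | c ≤ ⟪v, z⟫} :=
    fun v c => (isClosed_le continuous_const (innerSL ℝ v).continuous).measurableSet
  -- every term at m equals 1/2
  have key : ∀ v : EuclideanSpace ℝ (Fin d), ‖v‖ = 1 →
      μ {z | 0 ≤ ⟪v, z - m⟫} = 1 / 2 := by
    intro v hv
    have hv0 : v ≠ 0 := fun h => by simp [h] at hv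
    have hA : {z : EuclideanSpace ℝ (Fin d) | 0 ≤ ⟪v, z - m⟫} =
        {z | ⟪v, m⟫ ≤ ⟪v, z⟫} := by
      ext z; simp [inner_sub_right, sub_nonneg]
    have hlow : (1 / 2 : ENNReal) ≤ μ {z | 0 ≤ ⟪v, z - m⟫} := by
      rw [hA]; exact hsym v ⟪v, m⟫ hv le_rfl
    have hlowB : (1 / 2 : ENNReal) ≤ μ {z | ⟪v, z⟫ ≤ ⟪v, m⟫} := by
      have := hsym (-v) ⟪-v, m⟫ (by simpa using hv) le_rfl
      simpa [inner_neg_left, neg_le_neg_iff] using this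
    have hsum : μ {z | 0 ≤ ⟪v, z - m⟫} + μ {z | ⟪v, z⟫ ≤ ⟪v, m⟫} = 1 := by
      have hunion : {z : EuclideanSpace ℝ (Fin d) | 0 ≤ ⟪v, z - m⟫} ∪
          {z | ⟪v, z⟫ ≤ ⟪v, m⟫} = Set.univ := by
        rw [hA]
        ext z
        simp only [Set.mem_union, Set.mem_setOf_eq, Set.mem_univ, iff_true]
        exact le_total ⟪v, m⟫ ⟪v, z⟫
      have hinter : μ ({z : EuclideanSpace ℝ (Fin d) | 0 ≤ ⟪v, z - m⟫} ∩
          {z | ⟪v, z⟫ ≤ ⟪v, m⟫}) = 0 := by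
        have : {z : EuclideanSpace ℝ (Fin d) | 0 ≤ ⟪v, z - m⟫} ∩
            {z | ⟪v, z⟫ ≤ ⟪v, m⟫} ⊆ {z | ⟪v, z - m⟫ = 0} := by
          intro z hz
          rw [hA] at hz
          have : ⟪v, z⟫ = ⟪v, m⟫ := le_antisymm hz.2 hz.1
          show ⟪v, z - m⟫ = 0
          rw [inner_sub_right, this, sub_self]
        exact measure_mono_null this (hplane v m hv0)
      have := measure_union_add_inter (μ := μ)
        {z : EuclideanSpace ℝ (Fin d) | 0 ≤ ⟪v, z - m⟫}
        (by simpa using hmeas (-v) ⟪-v, m⟫ : MeasurableSet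
          {z : EuclideanSpace ℝ (Fin d) | ⟪v, z⟫ ≤ ⟪v, m⟫})
      rw [hunion, hinter, add_zero, measure_univ] at this
      exact this.symm
    -- conclude equality
    refine le_antisymm ?_ hlow
    have h2 : μ {z | 0 ≤ ⟪v, z - m⟫} + (1/2 : ENNReal) ≤ 1/2 + 1/2 := by
      calc μ {z | 0 ≤ ⟪v, z - m⟫} + (1/2 : ENNReal)
          ≤ μ {z | 0 ≤ ⟪v, z - m⟫} + μ {z | ⟪v, z⟫ ≤ ⟪v, m⟫} := by gcongr
        _ = 1 := hsum
        _ = 1/2 + 1/2 := (ENNReal.add_halves 1).symm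
    exact (ENNReal.add_le_add_iff_right (by norm_num)).mp h2
  -- a distinguished unit vector
  have hsphere : ∃ v : EuclideanSpace ℝ (Fin d), ‖v‖ = 1 := by
    refine ⟨EuclideanSpace.single ⟨0, hd⟩ (1 : ℝ), ?_⟩
    simp [EuclideanSpace.norm_single]
  obtain ⟨v0, hv0⟩ := hsphere
  have hinfm : (⨅ v : Metric.sphere (0 : EuclideanSpace ℝ (Fin d)) 1,
      μ {z | 0 ≤ ⟪(v : EuclideanSpace ℝ (Fin d)), z - m⟫}) = 1 / 2 := by
    have : ∀ v : Metric.sphere (0 : EuclideanSpace ℝ (Fin d)) 1,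
        μ {z | 0 ≤ ⟪(v : EuclideanSpace ℝ (Fin d)), z - m⟫} = 1 / 2 := by
      intro v
      exact key v (by simpa using mem_sphere_zero_iff_norm.mp v.2)
    have hne : Nonempty (Metric.sphere (0 : EuclideanSpace ℝ (Fin d)) 1) :=
      ⟨⟨v0, mem_sphere_zero_iff_norm.mpr hv0⟩⟩
    rw [iInf_congr this, iInf_const]
  refine ⟨hinfm, ?_⟩
  have hge : (1/2 : ENNReal) ≤ ⨆ x : EuclideanSpace ℝ (Fin d),
      ⨅ v : Metric.sphere (0 : EuclideanSpace ℝ (Fin d)) 1,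
        μ {z | 0 ≤ ⟪(v : EuclideanSpace ℝ (Fin d)), z - x⟫} := by
    have := le_iSup (fun x : EuclideanSpace ℝ (Fin d) =>
      ⨅ v : Metric.sphere (0 : EuclideanSpace ℝ (Fin d)) 1,
        μ {z | 0 ≤ ⟪(v : EuclideanSpace ℝ (Fin d)), z - x⟫}) m
    rw [hinfm] at this
    exact this
  refine le_antisymm ?_ hge
  refine iSup_le fun x => ?_
  -- at any point x, the infimum is at most 1/2
  set c := ⨅ v : Metric.sphere (0 : EuclideanSpace ℝ (Fin d)) 1,
      μ {z | 0 ≤ ⟪(v : EuclideanSpace ℝ (Fin d)), z - x⟫} with hc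
  have hx0 : v0 ≠ 0 := fun h => by simp [h] at hv0
  have h1 : c ≤ μ {z | 0 ≤ ⟪v0, z - x⟫} :=
    iInf_le _ (⟨v0, mem_sphere_zero_iff_norm.mpr hv0⟩ :
      Metric.sphere (0 : EuclideanSpace ℝ (Fin d)) 1)
  have h2 : c ≤ μ {z | 0 ≤ ⟪-v0, z - x⟫} :=
    iInf_le _ (⟨-v0, mem_sphere_zero_iff_norm.mpr (by simpa using hv0)⟩ :
      Metric.sphere (0 : EuclideanSpace ℝ (Fin d)) 1)
  have hsum : μ {z | 0 ≤ ⟪v0, z - x⟫} + μ {z | 0 ≤ ⟪-v0, z - x⟫} ≤ 1 := by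
    have hunion : {z : EuclideanSpace ℝ (Fin d) | 0 ≤ ⟪v0, z - x⟫} ∪
        {z | 0 ≤ ⟪-v0, z - x⟫} = Set.univ := by
      ext z
      simp only [Set.mem_union, Set.mem_setOf_eq, Set.mem_univ, iff_true, inner_neg_left,
        neg_nonneg]
      exact le_total 0 ⟪v0, z - x⟫
    have hinter : μ ({z : EuclideanSpace ℝ (Fin d) | 0 ≤ ⟪v0, z - x⟫} ∩
        {z | 0 ≤ ⟪-v0, z - x⟫}) = 0 := by
      refine measure_mono_null ?_ (hplane v0 x hx0)
      intro z hz
      have := hz.2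
      simp only [Set.mem_setOf_eq, inner_neg_left, neg_nonneg] at this
      exact le_antisymm this hz.1
    have hmB : MeasurableSet {z : EuclideanSpace ℝ (Fin d) | 0 ≤ ⟪-v0, z - x⟫} := by
      have : {z : EuclideanSpace ℝ (Fin d) | 0 ≤ ⟪-v0, z - x⟫} =
          {z | ⟪-v0, x⟫ ≤ ⟪-v0, z⟫} := by
        ext z; simp [inner_sub_right, sub_nonneg]
      rw [this]; exact hmeas _ _
    have := measure_union_add_inter (μ := μ)
      {z : EuclideanSpace ℝ (Fin d) | 0 ≤ ⟪v0, z - x⟫} hmB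
    rw [hunion, hinter, add_zero, measure_univ] at this
    exact this.symm.le
  by_contra hlt
  push_neg at hlt
  have : (1 : ENNReal) < 1 := by
    calc (1 : ENNReal) = 1/2 + 1/2 := (ENNReal.add_halves 1).symm
      _ < c + c := ENNReal.add_lt_add hlt hlt
      _ ≤ μ {z | 0 ≤ ⟪v0, z - x⟫} + μ {z | 0 ≤ ⟪-v0, z - x⟫} := add_le_add h1 h2
      _ ≤ 1 := hsum
  exact lt_irrefl _ this
end
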